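/- Let 0 ≤ γ < 1 and let Φ, Ψ be Young functions with Ψ^{−1}(t) = t^{−γ} Φ^{−1}(t) for all t > 0, and assume M_γ maps L^Φ(ℝ^n) boundedly into L^Ψ(ℝ^n) (which holds under this relation when 0 < γ < 1). Then there exist dimensional constants c_n, d_n with c_n d_n ≥ 1 and a constant c such that for every cube Q = Q(x,l) and every locally integrable f: ‖M_γ f‖_{L^Ψ_Q} ≤ c (1/Ψ^{−1}(1/|Q|)) sup_{t ≥ c_n d_n l} Ψ^{−1}(1/|Q(x,t)|) ‖f‖_{L^Φ_{Q(x,t)}}. -/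

import Mathlib

open MeasureTheory Set Real ENNReal Filter

noncomputable section

/-- The axis-parallel closed cube in `ℝⁿ` centered at `c` with side length `l`. -/
def cube (n : ℕ) (c : Fin n → ℝ) (l : ℝ) : Set (Fin n → ℝ) :=
  {y | ∀ i, |y i - c i| ≤ l / 2}

/-- The `ℝ≥0∞`-valued fractional maximal function `M_{γ,r} f`:
`sup_{Q ∋ x} |Q|^γ ((1/|Q|) ∫_Q |f|^r)^{1/r}`. -/
def fracMax (n : ℕ) (γ r : ℝ) (f : (Fin n → ℝ) → ℝ) (x : Fin n → ℝ) : ℝ≥0∞ :=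
  ⨆ (c : Fin n → ℝ) (l : ℝ) (_ : 0 < l) (_ : x ∈ cube n c l),
    volume (cube n c l) ^ γ *
      ((volume (cube n c l))⁻¹ * ∫⁻ y in cube n c l, ENNReal.ofReal |f y| ^ r) ^ (1 / r)

/-- The local sharp maximal function `M^♯_{0,s,Q₀} f (x)`, the supremum over
cubes `Q` with `x ∈ Q ⊆ Q₀` of `inf_c inf {α ≥ 0 : |{y ∈ Q : |f(y) - c| > α}| < s|Q|}`. -/
def localSharp (n : ℕ) (s : ℝ) (Q₀ : Set (Fin n → ℝ)) (f : (Fin n → ℝ) → ℝ)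
    (x : Fin n → ℝ) : ℝ≥0∞ :=
  ⨆ (c : Fin n → ℝ) (l : ℝ) (_ : 0 < l) (_ : x ∈ cube n c l) (_ : cube n c l ⊆ Q₀),
    ⨅ (a : ℝ), sInf {α : ℝ≥0∞ |
      volume {y ∈ cube n c l | α < ENNReal.ofReal |f y - a|} <
        ENNReal.ofReal s * volume (cube n c l)}

/-- `T` is of weak type `(r, q)`: `|{|Tf| > λ}| ≤ (C λ⁻¹ ‖f‖_{L^r})^q`. -/
def WeakType (n : ℕ) (T : ((Fin n → ℝ) → ℝ) → (Fin n → ℝ) → ℝ) (r q : ℝ) : Prop :=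
  ∃ C : ℝ, 0 < C ∧ ∀ (f : (Fin n → ℝ) → ℝ) (lam : ℝ), 0 < lam →
    volume {x | lam < |T f x|} ≤
      (ENNReal.ofReal (C / lam) * (∫⁻ y, ENNReal.ofReal |f y| ^ r) ^ (1 / r)) ^ q

/-- `cn` is a dimensional constant for which `|x-x'|/|x-y| ≤ cn 2^{-m}`
whenever `x, x' ∈ Q` and `y ∉ 2^m Q`. -/
def DimConst (n : ℕ) (cn : ℝ) : Prop :=
  0 < cn ∧ ∀ (c : Fin n → ℝ) (l : ℝ), 0 < l → ∀ m : ℕ, 1 ≤ m →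
    ∀ x x' y, x ∈ cube n c l → x' ∈ cube n c l → y ∉ cube n c (2 ^ m * l) →
      ‖x - x'‖ ≤ cn * 2 ^ (-(m : ℝ)) * ‖x - y‖

/-- Dini-type smoothness condition for the kernel `k` of a fractional type operator
of order `γ`, with modulus `ω`. -/
def DiniKernel (n : ℕ) (γ : ℝ) (k : (Fin n → ℝ) → (Fin n → ℝ) → ℝ)
    (ω : ℝ → ℝ) (cn : ℝ) : Prop :=
  (∀ ⦃s t : ℝ⦄, 0 < s → s ≤ t → ω s ≤ ω t) ∧ (∀ t, 0 < t → 0 ≤ ω t) ∧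
  IntegrableOn (fun t => ω (cn * t) / t) (Set.Ioo (0 : ℝ) 1) ∧
  ∃ C > 0, ∀ (c : Fin n → ℝ) (l : ℝ), 0 < l →
    ∀ x x' y, x ∈ cube n c l → x' ∈ cube n c l → y ∉ cube n c (2 * l) →
      |k x y - k x' y| ≤
        C * ‖x - y‖ ^ (-((n : ℝ) * (1 - γ))) * ω (‖x - x'‖ / ‖x - y‖)

/-- The (maximal) median of `g` over the cube `Q(c,l)` with parameter `t`. -/
def medianOn (n : ℕ) (g : (Fin n → ℝ) → ℝ) (t : ℝ) (c : Fin n → ℝ) (l : ℝ) : ℝ :=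
  sSup {M : ℝ | volume {y ∈ cube n c l | g y < M} ≤ ENNReal.ofReal t * volume (cube n c l)}

/-- `m♯_f(1-s, Q) = inf_a m_{|f-a|}(1-s, Q)`. -/
def sharpMedianOn (n : ℕ) (f : (Fin n → ℝ) → ℝ) (s : ℝ) (c : Fin n → ℝ) (l : ℝ) : ℝ :=
  ⨅ a : ℝ, medianOn n (fun y => |f y - a|) (1 - s) c l

/-- `Φ` satisfies condition `C`. -/
def CondC (Φ : ℝ → ℝ) : Prop :=
  Continuous Φ ∧ MonotoneOn Φ (Set.Ici 0) ∧ Φ 0 = 0 ∧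
    ∃ c > 0, ∀ t > 0, Φ (2 * t) ≤ c * Φ t

/-- A weight: nonnegative and locally integrable. -/
def IsWeight (n : ℕ) (w : (Fin n → ℝ) → ℝ) : Prop :=
  (∀ x, 0 ≤ w x) ∧ LocallyIntegrable w volume

/-- The pair of weights `(w, v)` satisfies condition `F`. -/
def CondF (n : ℕ) (w v : (Fin n → ℝ) → ℝ) : Prop :=
  ∃ c > 0, ∃ β > 0, ∃ α : ℝ, 0 < α ∧ α < 1 ∧
    ∀ (cc : Fin n → ℝ) (l : ℝ), 0 < l → ∀ E : Set (Fin n → ℝ),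
      MeasurableSet E → E ⊆ cube n cc l →
      volume E ≤ ENNReal.ofReal α * volume (cube n cc l) →
      ∫ x in E, w x ≤
        c * ((volume E).toReal / (volume (cube n cc l)).toReal) ^ β *
          ∫ x in cube n cc l \ E, v x

/-- A bounded, compactly supported, measurable function. -/
def NiceFun (n : ℕ) (f : (Fin n → ℝ) → ℝ) : Prop :=
  Measurable f ∧ HasCompactSupport f ∧ ∃ M : ℝ, ∀ x, |f x| ≤ M

/-- `m_g(t, Q₀) → 0` as the cubes `Q₀` increase to `ℝⁿ`. -/
def MedianTendstoZero (n : ℕ) (g : (Fin n → ℝ) → ℝ) (t : ℝ) : Prop :=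
  ∀ ε > 0, ∃ R > 0, ∀ (c : Fin n → ℝ) (l : ℝ), 0 < l →
    cube n (fun _ => 0) R ⊆ cube n c l → |medianOn n g t c l| < ε

/-- A Young function. -/
def IsYoung (Φ : ℝ → ℝ) : Prop :=
  ConvexOn ℝ (Set.Ici 0) Φ ∧ Continuous Φ ∧ MonotoneOn Φ (Set.Ici 0) ∧ Φ 0 = 0 ∧
  (∃ c > 0, ∀ t > 0, Φ (2 * t) ≤ c * Φ t) ∧
  Tendsto (fun t => Φ t / t) atTop atTop

/-- Generalized inverse of a Young function. -/
def youngInv (Φ : ℝ → ℝ) (t : ℝ) : ℝ :=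
  sInf {s : ℝ | 0 ≤ s ∧ t ≤ Φ s}

/-- The conjugate Young function `Ā(s) = sup_{t>0} (st - A(t))`. -/
def conjYoung (A : ℝ → ℝ) (s : ℝ) : ℝ :=
  sSup {v : ℝ | ∃ t > 0, v = s * t - A t}

/-- Unnormalized Luxemburg norm `‖f‖_{L^Φ_Q}`. -/
def luxNorm (n : ℕ) (Φ : ℝ → ℝ) (Q : Set (Fin n → ℝ)) (f : (Fin n → ℝ) → ℝ) : ℝ≥0∞ :=
  sInf {lam : ℝ≥0∞ | 0 < lam ∧
    ∫⁻ y in Q, ENNReal.ofReal (Φ (|f y| / lam.toReal)) ≤ 1}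

/-- Normalized Luxemburg average `‖f‖_{L^A(Q)}` (i.e. `(1/|Q|)∫_Q A(|f|/λ) ≤ 1`). -/
def luxAvg (n : ℕ) (A : ℝ → ℝ) (Q : Set (Fin n → ℝ)) (f : (Fin n → ℝ) → ℝ) : ℝ≥0∞ :=
  sInf {lam : ℝ≥0∞ | 0 < lam ∧
    ∫⁻ y in Q, ENNReal.ofReal (A (|f y| / lam.toReal)) ≤ volume Q}

/-- Luxemburg norm on all of `ℝⁿ`. -/
def luxNormGlobal (n : ℕ) (Φ : ℝ → ℝ) (f : (Fin n → ℝ) → ℝ) : ℝ≥0∞ :=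
  sInf {lam : ℝ≥0∞ | 0 < lam ∧
    ∫⁻ y, ENNReal.ofReal (Φ (|f y| / lam.toReal)) ≤ 1}

/-- Orlicz fractional maximal function `M_{γ,A} f(x) = sup_{Q ∋ x} |Q|^γ ‖f‖_{L^A(Q)}`. -/
def orliczMax (n : ℕ) (γ : ℝ) (A : ℝ → ℝ) (f : (Fin n → ℝ) → ℝ) (x : Fin n → ℝ) : ℝ≥0∞ :=
  ⨆ (c : Fin n → ℝ) (l : ℝ) (_ : 0 < l) (_ : x ∈ cube n c l),
    volume (cube n c l) ^ γ * luxAvg n A (cube n c l) f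

/-- Generalized Orlicz–Morrey norm `‖f‖_{𝓜^{Φ,φ}}`. -/
def morreyNorm (n : ℕ) (Φ : ℝ → ℝ) (φ : (Fin n → ℝ) → ℝ → ℝ) (f : (Fin n → ℝ) → ℝ) : ℝ≥0∞ :=
  ⨆ (x : Fin n → ℝ) (l : ℝ) (_ : 0 < l),
    ENNReal.ofReal ((1 / φ x l) * youngInv Φ (1 / (volume (cube n x l)).toReal)) *
      luxNorm n Φ (cube n x l) f

/-- Generalized Orlicz–Campanato seminorm `‖f‖_{𝓛^{Φ,φ}}`. -/
def campNorm (n : ℕ) (Φ : ℝ → ℝ) (φ : (Fin n → ℝ) → ℝ → ℝ) (f : (Fin n → ℝ) → ℝ) : ℝ≥0∞ :=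
  ⨆ (x : Fin n → ℝ) (l : ℝ) (_ : 0 < l),
    ENNReal.ofReal ((1 / φ x l) * youngInv Φ (1 / (volume (cube n x l)).toReal)) *
      ⨅ a : ℝ, luxNorm n Φ (cube n x l) (fun y => f y - a)

/-- The class `B_p` of Young functions. -/
def Bp (p : ℝ) (A : ℝ → ℝ) : Prop :=
  ∃ c > 0, IntegrableOn (fun t => A t / t ^ p / t) (Set.Ioi c)

/-- The class `B_{α,p}` of Cruz-Uribe and Moen (with `B_{0,p} = B_p`). -/
def Balphap (α p : ℝ) (A : ℝ → ℝ) : Prop :=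
  if α = 0 then Bp p A
  else ∃ c > 0,
    IntegrableOn (fun t => A t ^ ((1 / p - α)⁻¹ / p) / t ^ (1 / p - α)⁻¹ / t) (Set.Ioi c)

/-- The Riesz-potential-type integral `∫ |f(y)| |x-y|^{-n(1-γ)} dy`, valued in `ℝ≥0∞`. -/
def rieszPotential (n : ℕ) (γ : ℝ) (f : (Fin n → ℝ) → ℝ) (x : Fin n → ℝ) : ℝ≥0∞ :=
  ∫⁻ y, ENNReal.ofReal |f y| * ENNReal.ofReal (‖x - y‖ ^ (-((n : ℝ) * (1 - γ))))

end

section YoungAux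

variable {Φ : ℝ → ℝ}

lemma young_nonneg (hΦ : IsYoung Φ) {t : ℝ} (ht : 0 ≤ t) : 0 ≤ Φ t := by
  have h0 : Φ 0 = 0 := hΦ.2.2.2.1
  have := hΦ.2.2.1 (self_mem_Ici) ht ht
  linarith

lemma young_pos (hΦ : IsYoung Φ) {t : ℝ} (ht : 0 < t) : 0 < Φ t := by
  rcases lt_or_ge 0 (Φ t) with h | h
  · exact h
  have h0 : Φ t = 0 := le_antisymm h (young_nonneg hΦ ht.le)
  obtain ⟨c, hc, hdbl⟩ := hΦ.2.2.2.2.1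
  have hz : ∀ k : ℕ, Φ (2 ^ k * t) = 0 := by
    intro k
    induction k with
    | zero => simpa using h0
    | succ k ih =>
      have h2 : (2 : ℝ) ^ (k + 1) * t = 2 * (2 ^ k * t) := by ring
      have hpos : (0:ℝ) < 2 ^ k * t := by positivity
      have := hdbl _ hpos
      have hnn : 0 ≤ Φ (2 ^ (k+1) * t) := young_nonneg hΦ (by positivity)
      rw [h2] at hnn ⊢
      nlinarith
  -- contradiction with tendsto
  have := hΦ.2.2.2.2.2
  have hev := (this.eventually_ge_atTop 1).exists_forall_of_atTop (α := ℝ)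
  obtain ⟨a, ha⟩ := (this.eventually_ge_atTop 1).exists_forall_of_atTop
  obtain ⟨k, hk⟩ := pow_unbounded_of_one_lt (a / t) (one_lt_two (α := ℝ))
  have hge : a ≤ 2 ^ k * t := by
    rw [div_lt_iff₀ ht] at hk
    linarith
  have := ha _ hge
  rw [hz k, zero_div] at this
  linarith

lemma young_convex_ineq (hΦ : IsYoung Φ) {s t : ℝ} (hs : 0 ≤ s) (hst : s ≤ t) (ht : 0 < t) :
    Φ s ≤ (s / t) * Φ t := by
  have h0 : Φ 0 = 0 := hΦ.2.2.2.1
  have hcomb := hΦ.1.2 (self_mem_Ici (a := (0:ℝ))) (mem_Ici.2 (ht.le))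
    (show (0:ℝ) ≤ 1 - s / t by
      have : s / t ≤ 1 := (div_le_one ht).2 hst
      linarith) (show (0:ℝ) ≤ s / t by positivity) (by ring)
  have harg : (1 - s / t) • (0:ℝ) + (s / t) • t = s := by
    field_simp
    rw [smul_zero, zero_add, smul_eq_mul, div_mul_cancel₀ s ht.ne']
  rw [harg] at hcomb
  simpa [h0] using hcomb

lemma young_strictMonoOn (hΦ : IsYoung Φ) : StrictMonoOn Φ (Ici 0) := by
  intro s hs t ht hst
  have ht0 : 0 < t := lt_of_le_of_lt hs hst
  have h1 := young_convex_ineq hΦ hs hst.le ht0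
  have h2 : s / t < 1 := (div_lt_one ht0).2 hst
  have h3 : 0 < Φ t := young_pos hΦ ht0
  nlinarith [young_nonneg hΦ (hs : (0:ℝ) ≤ s)]

lemma young_smul (hΦ : IsYoung Φ) {K t : ℝ} (hK : 1 ≤ K) (ht : 0 ≤ t) :
    K * Φ t ≤ Φ (K * t) := by
  rcases eq_or_lt_of_le ht with rfl | ht0
  · simp [hΦ.2.2.2.1]
  have hKt : 0 < K * t := by positivity
  have := young_convex_ineq hΦ ht (by nlinarith) hKt
  rw [div_mul_eq_mul_div, le_div_iff₀ hKt] at this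
  nlinarith

lemma young_unbounded (hΦ : IsYoung Φ) (u : ℝ) : ∃ s, 0 ≤ s ∧ u ≤ Φ s := by
  obtain ⟨t, ht1, ht2⟩ := ((eventually_ge_atTop (1:ℝ)).and
    (hΦ.2.2.2.2.2.eventually_ge_atTop (|u|))).exists
  refine ⟨t, by linarith, ?_⟩
  have ht0 : 0 < t := by linarith
  have : |u| * t ≤ Φ t := (le_div_iff₀ ht0).1 ht2
  nlinarith [le_abs_self u, abs_nonneg u]

end YoungAux

section YoungInvAux

variable {Φ : ℝ → ℝ}

lemma younginv_set_nonempty (hΦ : IsYoung Φ) (u : ℝ) :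
    {s : ℝ | 0 ≤ s ∧ u ≤ Φ s}.Nonempty := by
  obtain ⟨s, hs, hus⟩ := young_unbounded hΦ u
  exact ⟨s, hs, hus⟩

lemma younginv_set_bddBelow (u : ℝ) : BddBelow {s : ℝ | 0 ≤ s ∧ u ≤ Φ s} :=
  ⟨0, fun s hs => hs.1⟩

lemma younginv_mem (hΦ : IsYoung Φ) (u : ℝ) :
    youngInv Φ u ∈ {s : ℝ | 0 ≤ s ∧ u ≤ Φ s} := by
  have hcl : IsClosed {s : ℝ | 0 ≤ s ∧ u ≤ Φ s} := by
    have : {s : ℝ | 0 ≤ s ∧ u ≤ Φ s} = Ici 0 ∩ Φ ⁻¹' (Ici u) := by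
      ext s
      simp only [mem_setOf_eq, mem_inter_iff, mem_Ici, mem_preimage]
    rw [this]
    exact isClosed_Ici.inter (isClosed_Ici.preimage hΦ.2.1)
  exact hcl.csInf_mem (younginv_set_nonempty hΦ u) (younginv_set_bddBelow u)

lemma younginv_nonneg (hΦ : IsYoung Φ) (u : ℝ) : 0 ≤ youngInv Φ u :=
  (younginv_mem hΦ u).1

lemma younginv_pos (hΦ : IsYoung Φ) {u : ℝ} (hu : 0 < u) : 0 < youngInv Φ u := by
  rcases eq_or_lt_of_le (younginv_nonneg hΦ u) with h | h
  · have := (younginv_mem hΦ u).2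
    rw [← h, hΦ.2.2.2.1] at this
    linarith
  · exact h

lemma young_younginv (hΦ : IsYoung Φ) {u : ℝ} (hu : 0 < u) : Φ (youngInv Φ u) = u := by
  set I := youngInv Φ u with hI
  have hmem := younginv_mem hΦ u
  have hIu : u ≤ Φ I := hmem.2
  have h0 : Φ 0 = 0 := hΦ.2.2.2.1
  obtain ⟨s, hsmem, hs⟩ := intermediate_value_Icc (hmem.1) hΦ.2.1.continuousOn
    (show u ∈ Icc (Φ 0) (Φ I) from ⟨by rw [h0]; exact hu.le, hIu⟩)
  have hsI : I ≤ s := csInf_le (younginv_set_bddBelow u) ⟨hsmem.1, hs.ge⟩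
  have : s = I := le_antisymm hsmem.2 hsI
  rw [← this, hs]

lemma le_younginv (hΦ : IsYoung Φ) {s u : ℝ} (hs : 0 ≤ s) (h : Φ s ≤ u) (hu : 0 < u) :
    s ≤ youngInv Φ u := by
  by_contra hlt
  push_neg at hlt
  have hmem := younginv_mem hΦ u
  have := young_strictMonoOn hΦ hmem.1 hs hlt
  have h2 := hmem.2
  linarith

lemma younginv_scale (hΦ : IsYoung Φ) {K u : ℝ} (hK : 1 ≤ K) (hu : 0 < u) :
    youngInv Φ (K * u) ≤ K * youngInv Φ u := by
  apply csInf_le (younginv_set_bddBelow _)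
  refine ⟨mul_nonneg (by linarith) (younginv_nonneg hΦ u), ?_⟩
  calc K * u = K * Φ (youngInv Φ u) := by rw [young_younginv hΦ hu]
  _ ≤ Φ (K * youngInv Φ u) := young_smul hΦ hK (younginv_nonneg hΦ u)

end YoungInvAux

section CubeAux

variable {n : ℕ}

lemma cube_eq_pi (c : Fin n → ℝ) (l : ℝ) :
    cube n c l = Set.pi univ (fun i => Icc (c i - l / 2) (c i + l / 2)) := by
  ext y
  simp only [cube, mem_setOf_eq, Set.mem_pi, mem_univ, true_implies, mem_Icc, abs_sub_le_iff]
  constructor <;> intro h i <;> have := h i <;> constructor <;> linarith [this.1, this.2]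

lemma measurableSet_cube (c : Fin n → ℝ) (l : ℝ) : MeasurableSet (cube n c l) := by
  rw [cube_eq_pi]
  exact MeasurableSet.univ_pi (fun i => measurableSet_Icc)

lemma isCompact_cube (c : Fin n → ℝ) (l : ℝ) : IsCompact (cube n c l) := by
  rw [cube_eq_pi]
  exact isCompact_univ_pi (fun i => isCompact_Icc)

lemma volume_cube (c : Fin n → ℝ) {l : ℝ} (hl : 0 ≤ l) :
    volume (cube n c l) = ENNReal.ofReal (l ^ n) := by
  rw [cube_eq_pi, volume_pi_pi]
  simp only [Real.volume_Icc]
  have : ∀ i : Fin n, c i + l / 2 - (c i - l / 2) = l := fun i => by ring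
  simp only [this]
  rw [Finset.prod_const, ← ENNReal.ofReal_pow hl]
  simp

lemma cube_subset_cube {c : Fin n → ℝ} {l l' : ℝ} (h : l ≤ l') :
    cube n c l ⊆ cube n c l' := by
  intro y hy i
  exact le_trans (hy i) (by linarith)

lemma cube_subset_of_mem {x c' : Fin n → ℝ} {l s : ℝ} {z : Fin n → ℝ}
    (hz1 : z ∈ cube n c' s) (hz2 : z ∈ cube n x l) :
    cube n c' s ⊆ cube n x (2 * s + l) := by
  intro w hw i
  have h1 := hw i
  have h2 := hz1 i
  have h3 := hz2 i
  have : |w i - x i| ≤ |w i - c' i| + |c' i - z i| + |z i - x i| := by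
    calc |w i - x i| = |(w i - c' i) + (c' i - z i) + (z i - x i)| := by ring_nf
    _ ≤ _ := by
        refine le_trans (abs_add_le _ _) ?_
        gcongr
        exact abs_add_le _ _
  have h4 : |c' i - z i| ≤ s / 2 := by rw [abs_sub_comm]; exact h2
  calc |w i - x i| ≤ s / 2 + s / 2 + l / 2 := by linarith
  _ = (2 * s + l) / 2 := by ring

end CubeAux

section LuxAux

variable {n : ℕ} {Φ : ℝ → ℝ}

/-- `⊤` is always admissible. -/
lemma luxNorm_top_mem (Φ : ℝ → ℝ) (hΦ0 : Φ 0 = 0) (Q : Set (Fin n → ℝ))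
    (f : (Fin n → ℝ) → ℝ) :
    (⊤ : ℝ≥0∞) ∈ {lam : ℝ≥0∞ | 0 < lam ∧
      ∫⁻ y in Q, ENNReal.ofReal (Φ (|f y| / lam.toReal)) ≤ 1} := by
  constructor
  · exact ENNReal.zero_lt_top
  · simp [ENNReal.toReal_top, _root_.div_zero, hΦ0]

/-- Jensen / Hölder-type bound: the `L¹` integral is controlled by the Luxemburg norm. -/
lemma lintegral_le_luxNorm (hΦ : IsYoung Φ) {Q : Set (Fin n → ℝ)}
    (hQpos : 0 < volume Q) (hQfin : volume Q < ⊤)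
    {f : (Fin n → ℝ) → ℝ} (hfi : IntegrableOn f Q) :
    ∫⁻ y in Q, ENNReal.ofReal |f y| ≤
      ENNReal.ofReal ((volume Q).toReal * youngInv Φ (1 / (volume Q).toReal)) *
        luxNorm n Φ Q f := by
  set V : ℝ := (volume Q).toReal with hV
  have hV0 : 0 < V := ENNReal.toReal_pos hQpos.ne' hQfin.ne
  have hu : (0:ℝ) < 1 / V := by positivity
  set ψ : ℝ := youngInv Φ (1 / V) with hψ
  have hψ0 : 0 < ψ := younginv_pos hΦ hu
  set Jc : ℝ := V * ψ with hJc
  have hJc0 : 0 < Jc := by positivity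
  set A : ℝ≥0∞ := ∫⁻ y in Q, ENNReal.ofReal |f y| with hA
  have key : ∀ lam : ℝ≥0∞, (0 < lam ∧
      ∫⁻ y in Q, ENNReal.ofReal (Φ (|f y| / lam.toReal)) ≤ 1) →
      A / ENNReal.ofReal Jc ≤ lam := by
    rintro lam ⟨hlam0, hlam⟩
    rcases eq_or_ne lam ⊤ with rfl | hlamt
    · exact le_top
    have hl0 : 0 < lam.toReal := ENNReal.toReal_pos hlam0.ne' hlamt
    set lam₀ : ℝ := lam.toReal with hlam₀
    set μ : Measure (Fin n → ℝ) := volume.restrict Q with hμ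
    have hμuniv : μ univ = volume Q := by
      rw [hμ, Measure.restrict_apply_univ]
    haveI : IsFiniteMeasure μ := ⟨by rw [hμuniv]; exact hQfin⟩
    haveI : NeZero μ := ⟨fun h => hQpos.ne' (by rw [← hμuniv, h]; simp)⟩
    set u : (Fin n → ℝ) → ℝ := fun y => |f y| / lam₀ with husp
    have hu_nonneg : ∀ y, 0 ≤ u y := fun y => by positivity
    have hu_int : Integrable u μ := (hfi.abs.div_const lam₀)
    have hΦu_meas : AEStronglyMeasurable (fun y => Φ (u y)) μ :=
      hΦ.2.1.comp_aestronglyMeasurable hu_int.aestronglyMeasurable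
    have hΦu_nonneg : ∀ᵐ y ∂μ, 0 ≤ Φ (u y) :=
      Filter.Eventually.of_forall fun y => young_nonneg hΦ (hu_nonneg y)
    have hΦu_int : Integrable (fun y => Φ (u y)) μ := by
      refine ⟨hΦu_meas, (hasFiniteIntegral_iff_ofReal hΦu_nonneg).2 ?_⟩
      exact lt_of_le_of_lt hlam one_lt_top
    have hΦu_intval : ∫ y, Φ (u y) ∂μ ≤ 1 := by
      rw [integral_eq_lintegral_of_nonneg_ae hΦu_nonneg hΦu_meas]
      have := ENNReal.toReal_mono one_ne_top hlam
      simpa using this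
    -- Jensen
    have hjen := hΦ.1.map_average_le (μ := μ) hΦ.2.1.continuousOn isClosed_Ici
      (Filter.Eventually.of_forall fun y => mem_Ici.2 (hu_nonneg y)) hu_int
      ((Function.comp_def Φ u) ▸ hΦu_int)
    have havgΦ : ⨍ y, Φ (u y) ∂μ ≤ 1 / V := by
      rw [average_eq, measureReal_def, hμuniv, ← hV, smul_eq_mul]
      rw [div_eq_inv_mul]
      gcongr
    have havg_nonneg : 0 ≤ ⨍ y, u y ∂μ := by
      rw [average_eq]
      have : 0 ≤ ∫ y, u y ∂μ := integral_nonneg hu_nonneg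
      positivity
    have havg : ⨍ y, u y ∂μ ≤ ψ :=
      le_younginv hΦ havg_nonneg (le_trans hjen havgΦ) hu
    -- unfold average
    have hintu : ∫ y, u y ∂μ ≤ V * ψ := by
      rw [average_eq, measureReal_def, hμuniv, ← hV, smul_eq_mul] at havg
      rw [inv_mul_le_iff₀ hV0] at havg
      linarith [havg]
    have hintf : ∫ y in Q, |f y| ∂volume ≤ Jc * lam₀ := by
      have : ∫ y, u y ∂μ = (∫ y in Q, |f y| ∂volume) / lam₀ := by
        rw [hμ, integral_div]
      rw [this, div_le_iff₀ hl0] at hintu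
      calc ∫ y in Q, |f y| ∂volume ≤ V * ψ * lam₀ := hintu
      _ = Jc * lam₀ := by rw [hJc]
    have hAle : A ≤ ENNReal.ofReal (Jc * lam₀) := by
      rw [hA, ← ofReal_integral_eq_lintegral_ofReal hfi.abs
        (Filter.Eventually.of_forall fun y => abs_nonneg _)]
      exact ENNReal.ofReal_le_ofReal hintf
    rw [ENNReal.div_le_iff_le_mul (Or.inl (by simp [hJc0])) (Or.inl ofReal_ne_top)]
    calc A ≤ ENNReal.ofReal (Jc * lam₀) := hAle
    _ = ENNReal.ofReal lam₀ * ENNReal.ofReal Jc := by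
        rw [ENNReal.ofReal_mul hJc0.le, mul_comm]
    _ = lam * ENNReal.ofReal Jc := by rw [hlam₀, ENNReal.ofReal_toReal hlamt]
  have hdiv : A / ENNReal.ofReal Jc ≤ luxNorm n Φ Q f := le_sInf (fun lam hlam => key lam hlam)
  rwa [ENNReal.div_le_iff_le_mul (Or.inl (by simp [hJc0])) (Or.inl ofReal_ne_top),
    mul_comm] at hdiv

end LuxAux

section FracAux

variable {n : ℕ}

lemma fracMax_mono {γ : ℝ} {f₁ f : (Fin n → ℝ) → ℝ} (h : ∀ y, |f₁ y| ≤ |f y|)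
    (z : Fin n → ℝ) : fracMax n γ 1 f₁ z ≤ fracMax n γ 1 f z := by
  refine iSup_mono fun c => iSup_mono fun l => iSup_mono fun hl => iSup_mono fun hz => ?_
  refine mul_le_mul' le_rfl (ENNReal.rpow_le_rpow (mul_le_mul' le_rfl ?_) (by norm_num))
  refine lintegral_mono fun y => ?_
  exact ENNReal.rpow_le_rpow (ENNReal.ofReal_le_ofReal (h y)) (by norm_num)

lemma rcalc {a A ψ γ M : ℝ} (ha : 0 < a) (hA : 0 < A) (hψ : 0 ≤ ψ)
    (hγ0 : 0 ≤ γ) (hγ1 : γ < 1) (hM : 0 ≤ M) (hAa : A ≤ M * a) :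
    a ^ γ * a⁻¹ * (A * ((1 / A) ^ γ * ψ)) ≤ M ^ (1 - γ) * ψ := by
  have h1 : a ^ γ * a⁻¹ = (a ^ (1 - γ))⁻¹ := by
    rw [← Real.rpow_neg ha.le, neg_sub, Real.rpow_sub ha, Real.rpow_one]
    ring
  have h2 : A * (1 / A) ^ γ = A ^ (1 - γ) := by
    rw [one_div, Real.inv_rpow hA.le, ← Real.rpow_neg hA.le]
    nth_rewrite 1 [← Real.rpow_one A]
    rw [← Real.rpow_add hA]
    ring_nf
  have h3 : A ^ (1 - γ) ≤ M ^ (1 - γ) * a ^ (1 - γ) := by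
    rw [← Real.mul_rpow hM ha.le]
    exact Real.rpow_le_rpow hA.le hAa (by linarith)
  calc a ^ γ * a⁻¹ * (A * ((1 / A) ^ γ * ψ))
      = (A * (1 / A) ^ γ) * (a ^ γ * a⁻¹) * ψ := by ring
  _ = A ^ (1 - γ) * (a ^ (1 - γ))⁻¹ * ψ := by rw [h1, h2]
  _ ≤ (M ^ (1 - γ) * a ^ (1 - γ)) * (a ^ (1 - γ))⁻¹ * ψ := by
      have hap : 0 < a ^ (1 - γ) := Real.rpow_pos_of_pos ha _
      gcongr
  _ = M ^ (1 - γ) * ψ := by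
      have hap : a ^ (1 - γ) ≠ 0 := (Real.rpow_pos_of_pos ha _).ne'
      field_simp

end FracAux

section SplitAux

variable {n : ℕ}

/-- Pointwise splitting bound for the fractional maximal function. -/
lemma fracMax_split {γ : ℝ} (hγ0 : 0 ≤ γ) (hγ1 : γ < 1)
    {Φ Ψ : ℝ → ℝ} (hΦ : IsYoung Φ) (hΨ : IsYoung Ψ)
    (hinvΦ : ∀ u : ℝ, 0 < u → youngInv Φ u = u ^ γ * youngInv Ψ u)
    (x : Fin n → ℝ) {l : ℝ} (hl : 0 < l)
    {f : (Fin n → ℝ) → ℝ} (hf : LocallyIntegrable f volume)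
    {z : Fin n → ℝ} (hz : z ∈ cube n x l) :
    fracMax n γ 1 f z ≤
      fracMax n γ 1 ((cube n x (3 * l)).indicator f) z ⊔
        (ENNReal.ofReal (((3:ℝ) ^ n) ^ (1 - γ)) *
          ⨆ (t : ℝ) (_ : 3 * 1 * l ≤ t),
            ENNReal.ofReal (youngInv Ψ (1 / (volume (cube n x t)).toReal)) *
              luxNorm n Φ (cube n x t) f) := by
  set f₁ := (cube n x (3 * l)).indicator f with hf₁
  refine iSup_le fun c' => iSup_le fun s => iSup_le fun hs => iSup_le fun hzR => ?_
  have hbody : ∀ g : (Fin n → ℝ) → ℝ,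
      volume (cube n c' s) ^ γ *
        ((volume (cube n c' s))⁻¹ *
          ∫⁻ y in cube n c' s, ENNReal.ofReal |g y| ^ (1:ℝ)) ^ ((1:ℝ)/1) =
      volume (cube n c' s) ^ γ *
        ((volume (cube n c' s))⁻¹ * ∫⁻ y in cube n c' s, ENNReal.ofReal |g y|) := by
    intro g
    norm_num
  rcases le_or_gt s l with hsl | hls
  · -- small cube: f agrees with f₁ on the cube
    refine le_sup_of_le_left ?_
    have hsub : cube n c' s ⊆ cube n x (3 * l) :=
      (cube_subset_of_mem hzR hz).trans (cube_subset_cube (by linarith))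
    have heq : ∫⁻ y in cube n c' s, ENNReal.ofReal |f y| ^ (1:ℝ) =
        ∫⁻ y in cube n c' s, ENNReal.ofReal |f₁ y| ^ (1:ℝ) := by
      refine setLIntegral_congr_fun (measurableSet_cube c' s)
        (fun y hy => ?_)
      rw [hf₁, Set.indicator_of_mem (hsub hy)]
    rw [heq]
    exact le_iSup_of_le c' (le_iSup_of_le s (le_iSup_of_le hs
      (le_iSup (fun _ : z ∈ cube n c' s =>
        volume (cube n c' s) ^ γ *
          ((volume (cube n c' s))⁻¹ *
            ∫⁻ y in cube n c' s, ENNReal.ofReal |f₁ y| ^ (1:ℝ)) ^ ((1:ℝ)/1)) hzR)))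
  · -- big cube
    refine le_sup_of_le_right ?_
    rw [hbody]
    set T : ℝ := 2 * s + l with hT
    have hT0 : 0 < T := by positivity
    have hT3 : 3 * 1 * l ≤ T := by linarith
    have hTs : T ≤ 3 * s := by linarith
    have hsub : cube n c' s ⊆ cube n x T := cube_subset_of_mem hzR hz
    have hVT : volume (cube n x T) = ENNReal.ofReal (T ^ n) := volume_cube x hT0.le
    have hVTr : (volume (cube n x T)).toReal = T ^ n := by
      rw [hVT, ENNReal.toReal_ofReal (by positivity)]
    have hTV0 : (0:ℝ≥0∞) < volume (cube n x T) := by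
      rw [hVT]; exact ENNReal.ofReal_pos.2 (by positivity)
    have hTVfin : volume (cube n x T) < ⊤ := by rw [hVT]; exact ofReal_lt_top
    have hfiT : IntegrableOn f (cube n x T) volume :=
      hf.integrableOn_isCompact (isCompact_cube x T)
    set ψT : ℝ := youngInv Ψ (1 / T ^ n) with hψT
    have hψT0 : 0 ≤ ψT := younginv_nonneg hΨ _
    set LT : ℝ≥0∞ := luxNorm n Φ (cube n x T) f with hLT
    have hIbound : ∫⁻ y in cube n c' s, ENNReal.ofReal |f y| ≤
        ENNReal.ofReal (T ^ n * youngInv Φ (1 / T ^ n)) * LT := by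
      refine le_trans (lintegral_mono_set hsub) ?_
      have := lintegral_le_luxNorm hΦ hTV0 hTVfin hfiT
      rwa [hVTr] at this
    have hVR : volume (cube n c' s) = ENNReal.ofReal (s ^ n) := volume_cube c' hs.le
    have hsn : (0:ℝ) < s ^ n := by positivity
    have hcoeff : volume (cube n c' s) ^ γ * (volume (cube n c' s))⁻¹ *
        ENNReal.ofReal (T ^ n * youngInv Φ (1 / T ^ n)) ≤
        ENNReal.ofReal (((3:ℝ) ^ n) ^ (1 - γ) * ψT) := by
      rw [hVR, ENNReal.ofReal_rpow_of_pos hsn, ← ENNReal.ofReal_inv_of_pos hsn,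
        ← ENNReal.ofReal_mul (by positivity), ← ENNReal.ofReal_mul (by positivity)]
      refine ENNReal.ofReal_le_ofReal ?_
      rw [hinvΦ _ (by positivity), hψT]
      have hAa : T ^ n ≤ (3:ℝ) ^ n * s ^ n := by
        rw [← mul_pow]
        exact pow_le_pow_left₀ hT0.le hTs n
      have := rcalc hsn (show (0:ℝ) < T ^ n by positivity)
        (younginv_nonneg hΨ (1 / T ^ n)) hγ0 hγ1
        (show (0:ℝ) ≤ (3:ℝ)^n by positivity) hAa
      calc (s ^ n) ^ γ * (s ^ n)⁻¹ * (T ^ n * ((1 / T ^ n) ^ γ * youngInv Ψ (1 / T ^ n)))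
          ≤ ((3:ℝ) ^ n) ^ (1 - γ) * youngInv Ψ (1 / T ^ n) := this
      _ = ((3:ℝ) ^ n) ^ (1 - γ) * youngInv Ψ (1 / T ^ n) := rfl
    calc volume (cube n c' s) ^ γ *
          ((volume (cube n c' s))⁻¹ * ∫⁻ y in cube n c' s, ENNReal.ofReal |f y|)
        ≤ volume (cube n c' s) ^ γ *
          ((volume (cube n c' s))⁻¹ *
            (ENNReal.ofReal (T ^ n * youngInv Φ (1 / T ^ n)) * LT)) := by gcongr
    _ = (volume (cube n c' s) ^ γ * (volume (cube n c' s))⁻¹ *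
          ENNReal.ofReal (T ^ n * youngInv Φ (1 / T ^ n))) * LT := by ring
    _ ≤ ENNReal.ofReal (((3:ℝ) ^ n) ^ (1 - γ) * ψT) * LT := by gcongr
    _ = ENNReal.ofReal (((3:ℝ) ^ n) ^ (1 - γ)) * (ENNReal.ofReal ψT * LT) := by
        rw [ENNReal.ofReal_mul (by positivity), mul_assoc]
    _ ≤ _ := by
        gcongr
        have hterm : ENNReal.ofReal ψT * LT =
            ENNReal.ofReal (youngInv Ψ (1 / (volume (cube n x T)).toReal)) *
              luxNorm n Φ (cube n x T) f := by rw [hVTr]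
        rw [hterm]
        exact le_iSup_of_le T (le_iSup (fun _ : 3 * 1 * l ≤ T =>
          ENNReal.ofReal (youngInv Ψ (1 / (volume (cube n x T)).toReal)) *
            luxNorm n Φ (cube n x T) f) hT3)

end SplitAux

/-- Proposition 5.1 (ii): `‖M_γ f‖_{L^Ψ_Q} ≤
c (1/Ψ⁻¹(1/|Q|)) sup_{t ≥ cₙdₙ l} Ψ⁻¹(1/|Q(x,t)|) ‖f‖_{L^Φ_{Q(x,t)}}`. -/
theorem orlicz_local_estimate_fracMax_ii
    (n : ℕ) (hn : 1 ≤ n) (γ : ℝ) (hγ0 : 0 ≤ γ) (hγ1 : γ < 1)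
    (Φ Ψ : ℝ → ℝ) (hΦ : IsYoung Φ) (hΨ : IsYoung Ψ)
    (hinv : ∀ t : ℝ, 0 < t → youngInv Ψ t = t ^ (-γ) * youngInv Φ t)
    (hbdd : ∃ C : ℝ, 0 < C ∧ ∀ f : (Fin n → ℝ) → ℝ,
      luxNormGlobal n Ψ (fun x => (fracMax n γ 1 f x).toReal) ≤
        ENNReal.ofReal C * luxNormGlobal n Φ f) :
    ∃ cn dn : ℝ, 0 < cn ∧ 0 < dn ∧ 1 ≤ cn * dn ∧ ∃ c : ℝ, 0 < c ∧
      ∀ (x : Fin n → ℝ) (l : ℝ), 0 < l →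
        ∀ f : (Fin n → ℝ) → ℝ, LocallyIntegrable f volume →
          luxNorm n Ψ (cube n x l) (fun z => (fracMax n γ 1 f z).toReal) ≤
            ENNReal.ofReal
                (c * (1 / youngInv Ψ (1 / (volume (cube n x l)).toReal))) *
              ⨆ (t : ℝ) (_ : cn * dn * l ≤ t),
                ENNReal.ofReal (youngInv Ψ (1 / (volume (cube n x t)).toReal)) *
                  luxNorm n Φ (cube n x t) f := by
  obtain ⟨C, hC, hbdd⟩ := hbdd
  set K : ℝ := ((3:ℝ) ^ n) ^ (1 - γ) with hK
  have hK0 : 0 < K := by positivity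
  set c : ℝ := C * 3 ^ n + K with hc
  have hc0 : 0 < c := by positivity
  refine ⟨3, 1, by norm_num, by norm_num, by norm_num, c, hc0, ?_⟩
  intro x l hl f hf
  have hinvΦ : ∀ u : ℝ, 0 < u → youngInv Φ u = u ^ γ * youngInv Ψ u := by
    intro u hu
    rw [hinv u hu, ← mul_assoc]
    have : u ^ γ * u ^ (-γ) = 1 := by
      rw [← Real.rpow_add hu]; simp
    rw [this, one_mul]
  -- basic quantities
  have hVQ : volume (cube n x l) = ENNReal.ofReal (l ^ n) := volume_cube x hl.le
  have hln : (0:ℝ) < l ^ n := by positivity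
  have hVQr : (volume (cube n x l)).toReal = l ^ n := by
    rw [hVQ, ENNReal.toReal_ofReal hln.le]
  set ψ : ℝ := youngInv Ψ (1 / l ^ n) with hψdef
  have hψ0 : 0 < ψ := younginv_pos hΨ (by positivity)
  set S : ℝ≥0∞ := ⨆ (t : ℝ) (_ : 3 * 1 * l ≤ t),
      ENNReal.ofReal (youngInv Ψ (1 / (volume (cube n x t)).toReal)) *
        luxNorm n Φ (cube n x t) f with hS
  rw [hVQr, ← hψdef]
  rcases eq_or_ne S ⊤ with hStop | hSne
  · rw [hStop, ENNReal.mul_top (by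
      simp only [ne_eq, ENNReal.ofReal_eq_zero, not_le]
      positivity)]
    exact le_top
  -- finite case
  set f₁ : (Fin n → ℝ) → ℝ := (cube n x (3 * l)).indicator f with hf₁
  set g : (Fin n → ℝ) → ℝ := fun z => (fracMax n γ 1 f z).toReal with hg
  set g₁ : (Fin n → ℝ) → ℝ := fun z => (fracMax n γ 1 f₁ z).toReal with hg₁
  set B : ℝ≥0∞ := ENNReal.ofReal K * S with hB
  have hBne : B ≠ ⊤ := by
    rw [hB]
    exact ENNReal.mul_ne_top ofReal_ne_top hSne
  set b : ℝ := B.toReal with hb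
  have hb0 : 0 ≤ b := ENNReal.toReal_nonneg
  have habs : ∀ y, |f₁ y| ≤ |f y| := by
    intro y
    rw [hf₁]
    by_cases hy : y ∈ cube n x (3 * l)
    · rw [Set.indicator_of_mem hy]
    · rw [Set.indicator_of_notMem hy]; simp
  -- pointwise bound on the cube
  have hpt : ∀ z ∈ cube n x l, g z ≤ g₁ z + b := by
    intro z hz
    have hsplit := fracMax_split hγ0 hγ1 hΦ hΨ hinvΦ x hl hf hz
    rw [← hf₁, ← hS, ← hB] at hsplit
    rcases eq_or_ne (fracMax n γ 1 f z) ⊤ with htop | hne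
    · rw [hg]
      simp only [htop, ENNReal.toReal_top]
      positivity
    · have hfin1 : fracMax n γ 1 f₁ z ≠ ⊤ :=
        ne_top_of_le_ne_top hne (fracMax_mono habs z)
      have hsupne : fracMax n γ 1 f₁ z ⊔ B ≠ ⊤ := by
        simp [hfin1, hBne]
      have := ENNReal.toReal_mono hsupne hsplit
      rw [ENNReal.toReal_sup hfin1 hBne] at this
      calc g z ≤ max (g₁ z) b := this
      _ ≤ g₁ z + b := max_le (le_add_of_nonneg_right hb0)
          (le_add_of_nonneg_left ENNReal.toReal_nonneg)
  set Λ₂ : ℝ≥0∞ := ENNReal.ofReal (b / ψ) with hΛ₂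
  have hg_nonneg : ∀ z, 0 ≤ g z := fun z => ENNReal.toReal_nonneg
  have hg₁_nonneg : ∀ z, 0 ≤ g₁ z := fun z => ENNReal.toReal_nonneg
  -- main admissibility claim
  have claim : ∀ lam₁ ∈ {lam : ℝ≥0∞ | 0 < lam ∧
      ∫⁻ y in cube n x l, ENNReal.ofReal (Ψ (|g₁ y| / lam.toReal)) ≤ 1},
      luxNorm n Ψ (cube n x l) g ≤ lam₁ + Λ₂ := by
    rintro lam₁ ⟨hlam₁0, hlam₁⟩
    refine sInf_le ⟨lt_of_lt_of_le hlam₁0 le_self_add, ?_⟩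
    rcases eq_or_ne lam₁ ⊤ with rfl | hlam₁ne
    · have htr : ((⊤ : ℝ≥0∞) + Λ₂).toReal = 0 := by simp
      rw [htr]
      simp only [_root_.div_zero, abs_zero] at *
      simp only [hΨ.2.2.2.1, ENNReal.ofReal_zero, lintegral_zero]
      exact zero_le_one
    rcases eq_or_lt_of_le hb0 with hb00 | hbpos
    · -- b = 0
      have hΛ₂0 : Λ₂ = 0 := by rw [hΛ₂, ← hb00]; simp
      rw [hΛ₂0, add_zero]
      refine le_trans (lintegral_mono_ae ?_) hlam₁
      refine (ae_restrict_iff' (measurableSet_cube x l)).2 (Filter.Eventually.of_forall ?_)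
      intro z hz
      have hgz : g z ≤ g₁ z := by
        have := hpt z hz
        rw [← hb00, add_zero] at this
        exact this
      refine ENNReal.ofReal_le_ofReal ?_
      have hlnn : (0:ℝ) ≤ lam₁.toReal := ENNReal.toReal_nonneg
      refine hΨ.2.2.1 (mem_Ici.2 (div_nonneg (abs_nonneg _) hlnn))
        (mem_Ici.2 (div_nonneg (abs_nonneg _) hlnn)) ?_
      rw [abs_of_nonneg (hg_nonneg z), abs_of_nonneg (hg₁_nonneg z)]
      gcongr
    · -- b > 0
      have hla2pos : (0:ℝ) < b / ψ := by positivity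
      set la1 : ℝ := lam₁.toReal with hla1
      have hla1pos : 0 < la1 := ENNReal.toReal_pos hlam₁0.ne' hlam₁ne
      set la2 : ℝ := b / ψ with hla2
      set la0 : ℝ := la1 + la2 with hla0
      have hla0pos : 0 < la0 := by positivity
      have hsum : (lam₁ + Λ₂).toReal = la0 := by
        rw [ENNReal.toReal_add hlam₁ne ofReal_ne_top, ENNReal.toReal_ofReal hla2pos.le]
      set θ : ℝ := la1 / la0 with hθ
      have hθ0 : 0 ≤ θ := by positivity
      have hθ1 : θ ≤ 1 := by
        rw [hθ, div_le_one hla0pos]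
        linarith
      have h1mθ : 1 - θ = la2 / la0 := by
        rw [hθ]
        field_simp
        rw [hla0]
        ring
      have hΨb : Ψ (b / la2) = 1 / l ^ n := by
        have h' : b / la2 = ψ := by
          rw [hla2]
          field_simp
        rw [h', hψdef]
        exact young_younginv hΨ (by positivity)
      have hptwise : ∀ z ∈ cube n x l,
          Ψ (|g z| / la0) ≤ θ * Ψ (|g₁ z| / la1) + (1 - θ) * (1 / l ^ n) := by
        intro z hz
        have h1 : Ψ (|g z| / la0) ≤ Ψ ((|g₁ z| + b) / la0) := by
          refine hΨ.2.2.1 (mem_Ici.2 (div_nonneg (abs_nonneg _) hla0pos.le))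
            (mem_Ici.2 (div_nonneg (by positivity) hla0pos.le)) ?_
          have hpz := hpt z hz
          rw [abs_of_nonneg (hg_nonneg z), abs_of_nonneg (hg₁_nonneg z)]
          gcongr
        have harg : (|g₁ z| + b) / la0 = θ • (|g₁ z| / la1) + (1 - θ) • (b / la2) := by
          rw [smul_eq_mul, smul_eq_mul, hθ, h1mθ]
          field_simp
        have hconv := hΨ.1.2
          (show |g₁ z| / la1 ∈ Ici 0 from mem_Ici.2 (div_nonneg (abs_nonneg _) hla1pos.le))
          (show b / la2 ∈ Ici 0 from mem_Ici.2 (div_nonneg hb0 hla2pos.le)) hθ0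
          (show (0:ℝ) ≤ 1 - θ by linarith) (show θ + (1 - θ) = 1 by ring)
        rw [← harg] at hconv
        rw [smul_eq_mul, smul_eq_mul, hΨb] at hconv
        linarith [h1 , hconv]
      -- integrate
      rw [hsum]
      have hΨg₁nn : ∀ z : Fin n → ℝ, 0 ≤ Ψ (|g₁ z| / la1) :=
        fun z => young_nonneg hΨ (by positivity)
      have h1mθ0 : (0:ℝ) ≤ 1 - θ := by linarith
      calc ∫⁻ y in cube n x l, ENNReal.ofReal (Ψ (|g y| / la0))
          ≤ ∫⁻ y in cube n x l,
            (ENNReal.ofReal θ * ENNReal.ofReal (Ψ (|g₁ y| / la1)) +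
              ENNReal.ofReal ((1 - θ) * (1 / l ^ n))) := by
            refine lintegral_mono_ae ((ae_restrict_iff' (measurableSet_cube x l)).2
              (Filter.Eventually.of_forall fun z hz => ?_))
            calc ENNReal.ofReal (Ψ (|g z| / la0))
                ≤ ENNReal.ofReal (θ * Ψ (|g₁ z| / la1) + (1 - θ) * (1 / l ^ n)) :=
                  ENNReal.ofReal_le_ofReal (hptwise z hz)
            _ = ENNReal.ofReal (θ * Ψ (|g₁ z| / la1)) +
                ENNReal.ofReal ((1 - θ) * (1 / l ^ n)) :=
                  ENNReal.ofReal_add (mul_nonneg hθ0 (hΨg₁nn z))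
                    (mul_nonneg h1mθ0 (by positivity))
            _ = ENNReal.ofReal θ * ENNReal.ofReal (Ψ (|g₁ z| / la1)) +
                ENNReal.ofReal ((1 - θ) * (1 / l ^ n)) := by
                  rw [ENNReal.ofReal_mul hθ0]
      _ = ENNReal.ofReal θ * (∫⁻ y in cube n x l, ENNReal.ofReal (Ψ (|g₁ y| / la1))) +
            ENNReal.ofReal ((1 - θ) * (1 / l ^ n)) * volume (cube n x l) := by
          rw [lintegral_add_right _ measurable_const,
            lintegral_const_mul' _ _ ofReal_ne_top, setLIntegral_const]
      _ ≤ ENNReal.ofReal θ * 1 +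
            ENNReal.ofReal ((1 - θ) * (1 / l ^ n)) * volume (cube n x l) := by
          gcongr
      _ ≤ 1 := by
          have e1 : ENNReal.ofReal ((1 - θ) * (1 / l ^ n)) * volume (cube n x l) =
              ENNReal.ofReal (1 - θ) := by
            rw [hVQ, ← ENNReal.ofReal_mul (mul_nonneg h1mθ0 (by positivity))]
            congr 1
            field_simp
          rw [mul_one, e1, ← ENNReal.ofReal_add hθ0 h1mθ0]
          simp
  -- from the claim: luxNorm g ≤ luxNorm g₁ + Λ₂
  have hstep1 : luxNorm n Ψ (cube n x l) g ≤ luxNorm n Ψ (cube n x l) g₁ + Λ₂ := by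
    have heq : luxNorm n Ψ (cube n x l) g₁ + Λ₂ =
        ⨅ lam₁ : ℝ≥0∞, ⨅ (_ : lam₁ ∈ {lam : ℝ≥0∞ | 0 < lam ∧
          ∫⁻ y in cube n x l, ENNReal.ofReal (Ψ (|g₁ y| / lam.toReal)) ≤ 1}),
            (lam₁ + Λ₂) := by
      rw [luxNorm, sInf_eq_iInf, ENNReal.iInf_add]
      exact iInf_congr fun a => ENNReal.iInf_add
    rw [heq]
    exact le_iInf₂ claim
  -- luxNorm g₁ over the cube is at most the global norm
  have hstep2 : luxNorm n Ψ (cube n x l) g₁ ≤ luxNormGlobal n Ψ g₁ := by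
    refine sInf_le_sInf ?_
    rintro lam ⟨h0, h1⟩
    exact ⟨h0, (setLIntegral_le_lintegral _ _).trans h1⟩
  have hstep3 : luxNormGlobal n Ψ g₁ ≤ ENNReal.ofReal C * luxNormGlobal n Φ f₁ := hbdd f₁
  have hstep4 : luxNormGlobal n Φ f₁ ≤ luxNorm n Φ (cube n x (3 * l)) f := by
    refine sInf_le_sInf ?_
    rintro lam ⟨h0, h1⟩
    refine ⟨h0, ?_⟩
    have hind : (fun y => ENNReal.ofReal (Φ (|f₁ y| / lam.toReal))) =
        (cube n x (3 * l)).indicator (fun y => ENNReal.ofReal (Φ (|f y| / lam.toReal))) := by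
      funext y
      by_cases hy : y ∈ cube n x (3 * l)
      · rw [Set.indicator_of_mem hy, hf₁, Set.indicator_of_mem hy]
      · rw [Set.indicator_of_notMem hy, hf₁, Set.indicator_of_notMem hy]
        simp [hΦ.2.2.2.1]
    rw [hind, lintegral_indicator (measurableSet_cube x (3 * l))]
    exact h1
  -- geometry of the three-times cube
  have h3l : (0:ℝ) < 3 * l := by linarith
  have hV3 : volume (cube n x (3 * l)) = ENNReal.ofReal ((3 * l) ^ n) :=
    volume_cube x h3l.le
  have h3ln : (0:ℝ) < (3 * l) ^ n := by positivity
  have hV3r : (volume (cube n x (3 * l))).toReal = (3 * l) ^ n := by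
    rw [hV3, ENNReal.toReal_ofReal h3ln.le]
  set ψ₃ : ℝ := youngInv Ψ (1 / (3 * l) ^ n) with hψ₃
  have hψ₃0 : 0 < ψ₃ := younginv_pos hΨ (by positivity)
  have hψle : ψ ≤ 3 ^ n * ψ₃ := by
    have h1 : (1:ℝ) / l ^ n = 3 ^ n * (1 / (3 * l) ^ n) := by
      rw [mul_pow]
      field_simp
    rw [hψdef, h1]
    exact younginv_scale hΨ (one_le_pow₀ (by norm_num)) (by positivity)
  set L₃ : ℝ≥0∞ := luxNorm n Φ (cube n x (3 * l)) f with hL₃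
  have hterm3 : ENNReal.ofReal ψ₃ * L₃ ≤ S := by
    rw [hS]
    have : ENNReal.ofReal ψ₃ * L₃ =
        ENNReal.ofReal (youngInv Ψ (1 / (volume (cube n x (3 * l))).toReal)) *
          luxNorm n Φ (cube n x (3 * l)) f := by rw [hV3r]
    rw [this]
    exact le_iSup_of_le (3 * l) (le_iSup (fun _ : 3 * 1 * l ≤ 3 * l =>
      ENNReal.ofReal (youngInv Ψ (1 / (volume (cube n x (3 * l))).toReal)) *
        luxNorm n Φ (cube n x (3 * l)) f) (by linarith))
  -- first piece
  have hpiece1 : ENNReal.ofReal C * L₃ ≤ ENNReal.ofReal (C * 3 ^ n * (1 / ψ)) * S := by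
    calc ENNReal.ofReal C * L₃
        ≤ (ENNReal.ofReal (C * 3 ^ n * (1 / ψ)) * ENNReal.ofReal ψ₃) * L₃ := by
          gcongr
          rw [← ENNReal.ofReal_mul (by positivity)]
          refine ENNReal.ofReal_le_ofReal ?_
          have h1 : (1:ℝ) ≤ (3 ^ n * ψ₃) / ψ := by
            rw [le_div_iff₀ hψ0]
            linarith
          calc C = C * 1 := (mul_one C).symm
          _ ≤ C * ((3 ^ n * ψ₃) / ψ) := mul_le_mul_of_nonneg_left h1 hC.le
          _ = C * 3 ^ n * (1 / ψ) * ψ₃ := by ring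
    _ = ENNReal.ofReal (C * 3 ^ n * (1 / ψ)) * (ENNReal.ofReal ψ₃ * L₃) := by ring
    _ ≤ ENNReal.ofReal (C * 3 ^ n * (1 / ψ)) * S := by gcongr
  -- second piece
  have hpiece2 : Λ₂ = ENNReal.ofReal (K * (1 / ψ)) * S := by
    rw [hΛ₂, div_eq_mul_inv, mul_comm b ψ⁻¹, ENNReal.ofReal_mul (by positivity), hb,
      ENNReal.ofReal_toReal hBne, hB, ENNReal.ofReal_mul hK0.le]
    rw [one_div]
    ring
  -- combine
  calc luxNorm n Ψ (cube n x l) g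
      ≤ luxNorm n Ψ (cube n x l) g₁ + Λ₂ := hstep1
  _ ≤ ENNReal.ofReal C * L₃ + Λ₂ := by
      gcongr
      exact hstep2.trans (hstep3.trans (by gcongr))
  _ ≤ ENNReal.ofReal (C * 3 ^ n * (1 / ψ)) * S + ENNReal.ofReal (K * (1 / ψ)) * S := by
      rw [hpiece2]
      gcongr
  _ = ENNReal.ofReal (c * (1 / ψ)) * S := by
      rw [← add_mul, ← ENNReal.ofReal_add (by positivity) (by positivity), hc]
      ring_nf
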